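/- arXiv:2405.08394 — 5 statements merged into one kernel-verified Lean document; each statement's English description precedes it below -/
import Mathlib

section
/- For ρ > 0, m ∈ ℝⁿ and U a symmetric trace-free n×n matrix, one has |m|²/(2ρ) ≤ e(ρ,m,U), with equality if and only if U = m⊗m/ρ − (|m|²/(nρ))·I_n. -/
open Matrix

/-- Rayleigh-quotient characterization of the largest eigenvalue of a symmetric matrix. -/
noncomputable def lamMax {n : ℕ} (A : Matrix (Fin n) (Fin n) ℝ) : ℝ :=
  sSup {r : ℝ | ∃ v : Fin n → ℝ, v ⬝ᵥ v = 1 ∧ r = v ⬝ᵥ A.mulVec v}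

/-- Smallest eigenvalue via the Rayleigh quotient. -/
noncomputable def lamMin {n : ℕ} (A : Matrix (Fin n) (Fin n) ℝ) : ℝ :=
  sInf {r : ℝ | ∃ v : Fin n → ℝ, v ⬝ᵥ v = 1 ∧ r = v ⬝ᵥ A.mulVec v}

/-- Operator (spectral) norm of a symmetric matrix: max of |Rayleigh quotient|. -/
noncomputable def opNorm {n : ℕ} (A : Matrix (Fin n) (Fin n) ℝ) : ℝ :=
  sSup {r : ℝ | ∃ v : Fin n → ℝ, v ⬝ᵥ v = 1 ∧ r = |v ⬝ᵥ A.mulVec v|}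

/-- The function e(ρ,m,U) = (n/2)·λ_max(m⊗m/ρ − U). -/
noncomputable def ee (n : ℕ) (ρ : ℝ) (m : Fin n → ℝ) (U : Matrix (Fin n) (Fin n) ℝ) : ℝ :=
  ((n : ℝ) / 2) * lamMax (ρ⁻¹ • Matrix.vecMulVec m m - U)

section Helpers
variable {n : ℕ}

def raySet (A : Matrix (Fin n) (Fin n) ℝ) : Set ℝ :=
  {r : ℝ | ∃ v : Fin n → ℝ, v ⬝ᵥ v = 1 ∧ r = v ⬝ᵥ A.mulVec v}

lemma lamMax_eq (A : Matrix (Fin n) (Fin n) ℝ) : lamMax A = sSup (raySet A) := rfl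

lemma absle_of_unit {v : Fin n → ℝ} (hv : v ⬝ᵥ v = 1) (i : Fin n) : |v i| ≤ 1 := by
  have h : v i * v i ≤ 1 := by
    rw [← hv]
    exact Finset.single_le_sum (f := fun j => v j * v j)
      (fun j _ => mul_self_nonneg _) (Finset.mem_univ i)
  nlinarith [abs_nonneg (v i), sq_abs (v i)]

lemma raySet_bddAbove (A : Matrix (Fin n) (Fin n) ℝ) : BddAbove (raySet A) := by
  refine ⟨∑ i, ∑ j, |A i j|, ?_⟩
  rintro r ⟨v, hv, rfl⟩
  have : v ⬝ᵥ A.mulVec v = ∑ i, ∑ j, v i * (A i j * v j) := by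
    simp [dotProduct, mulVec, Finset.mul_sum]
  rw [this]
  refine Finset.sum_le_sum fun i _ => Finset.sum_le_sum fun j _ => ?_
  calc v i * (A i j * v j) ≤ |v i * (A i j * v j)| := le_abs_self _
    _ = |v i| * |A i j| * |v j| := by rw [abs_mul, abs_mul]; ring
    _ ≤ |A i j| * 1 := by
        have t1 : |v i| * |A i j| ≤ |A i j| :=
          mul_le_of_le_one_left (abs_nonneg _) (absle_of_unit hv i)
        exact mul_le_mul t1 (absle_of_unit hv j) (abs_nonneg _) (abs_nonneg _)
    _ = |A i j| := by ring

lemma ray_single (A : Matrix (Fin n) (Fin n) ℝ) (i j : Fin n) :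
    (Pi.single i (1:ℝ)) ⬝ᵥ A.mulVec (Pi.single j 1) = A i j := by
  simp [Matrix.mulVec_single]

lemma ray_single' (A : Matrix (Fin n) (Fin n) ℝ) (i j : Fin n) (x z : ℝ) :
    (Pi.single i x) ⬝ᵥ A.mulVec (Pi.single j z) = x * A i j * z := by
  simp [Matrix.mulVec_single, mul_comm, mul_assoc, mul_left_comm]

lemma ray_le_lamMax (A : Matrix (Fin n) (Fin n) ℝ) {v : Fin n → ℝ} (hv : v ⬝ᵥ v = 1) :
    v ⬝ᵥ A.mulVec v ≤ lamMax A :=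
  le_csSup (raySet_bddAbove A) ⟨v, hv, rfl⟩

lemma diag_le_lamMax (A : Matrix (Fin n) (Fin n) ℝ) (i : Fin n) : A i i ≤ lamMax A := by
  rw [← ray_single A i i]; exact ray_le_lamMax A (by simp)

lemma trace_le (A : Matrix (Fin n) (Fin n) ℝ) : A.trace ≤ (n : ℝ) * lamMax A := by
  have h : A.trace = ∑ i : Fin n, A i i := by simp [Matrix.trace, Matrix.diag]
  rw [h]
  calc ∑ i : Fin n, A i i ≤ ∑ _i : Fin n, lamMax A :=
        Finset.sum_le_sum fun i _ => diag_le_lamMax A i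
    _ = (n : ℝ) * lamMax A := by simp [mul_comm]

lemma lamMax_smul_one (hn : 0 < n) (t : ℝ) :
    lamMax ((t : ℝ) • (1 : Matrix (Fin n) (Fin n) ℝ)) = t := by
  have key : ∀ v : Fin n → ℝ, v ⬝ᵥ v = 1 →
      v ⬝ᵥ ((t • (1 : Matrix (Fin n) (Fin n) ℝ)).mulVec v) = t := by
    intro v hv
    rw [Matrix.smul_mulVec, Matrix.one_mulVec, dotProduct_smul, hv]
    simp
  have i0 : Fin n := ⟨0, hn⟩
  rw [lamMax_eq]
  apply le_antisymm
  · refine csSup_le ⟨t, ⟨Pi.single i0 1, by simp, (key _ (by simp)).symm⟩⟩ ?_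
    rintro r ⟨v, hv, rfl⟩
    exact le_of_eq (key v hv)
  · exact le_csSup (raySet_bddAbove _) ⟨Pi.single i0 1, by simp, (key _ (by simp)).symm⟩

lemma trace_vmv (m : Fin n → ℝ) : (Matrix.vecMulVec m m).trace = m ⬝ᵥ m := by
  simp [Matrix.trace, Matrix.diag, Matrix.vecMulVec_apply, dotProduct]

lemma quad_nonneg (B : Matrix (Fin n) (Fin n) ℝ)
    (h : ∀ v : Fin n → ℝ, v ⬝ᵥ v = 1 → 0 ≤ v ⬝ᵥ B.mulVec v) (v : Fin n → ℝ) :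
    0 ≤ v ⬝ᵥ B.mulVec v := by
  rcases eq_or_ne v 0 with rfl | hv
  · simp
  · have hvv : 0 < v ⬝ᵥ v := by
      have hne : v ⬝ᵥ v ≠ 0 := by
        intro h0
        apply hv
        funext i
        have hle : v i * v i ≤ 0 := by
          rw [← h0]
          exact Finset.single_le_sum (f := fun j => v j * v j)
            (fun j _ => mul_self_nonneg _) (Finset.mem_univ i)
        simp only [Pi.zero_apply]
        nlinarith [mul_self_nonneg (v i)]
      have h0 : 0 ≤ v ⬝ᵥ v := Finset.sum_nonneg fun j _ => mul_self_nonneg _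
      exact h0.lt_of_ne (Ne.symm hne)
    set c : ℝ := (Real.sqrt (v ⬝ᵥ v))⁻¹ with hc
    have hcc : c * c = (v ⬝ᵥ v)⁻¹ := by
      rw [hc, ← mul_inv, Real.mul_self_sqrt hvv.le]
    have hunit : (c • v) ⬝ᵥ (c • v) = 1 := by
      rw [smul_dotProduct, dotProduct_smul, smul_eq_mul, smul_eq_mul, ← mul_assoc, hcc]
      field_simp
    have hpos := h (c • v) hunit
    have hexp : (c • v) ⬝ᵥ B.mulVec (c • v) = c * c * (v ⬝ᵥ B.mulVec v) := by
      rw [smul_dotProduct, Matrix.mulVec_smul, dotProduct_smul, smul_eq_mul, smul_eq_mul]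
      ring
    rw [hexp, hcc] at hpos
    have hc2 : 0 < (v ⬝ᵥ v)⁻¹ := by positivity
    nlinarith

end Helpers

/-- |m|²/(2ρ) ≤ e(ρ,m,U), with equality iff U = m⊗m/ρ − (|m|²/(nρ))Iₙ. -/
theorem ee_lower_bound (n : ℕ) (hn : 2 ≤ n) (ρ : ℝ) (hρ : 0 < ρ)
    (m : Fin n → ℝ) (U : Matrix (Fin n) (Fin n) ℝ)
    (hsym : U.IsSymm) (htr : U.trace = 0) :
    (m ⬝ᵥ m) / (2 * ρ) ≤ ee n ρ m U ∧
    ((m ⬝ᵥ m) / (2 * ρ) = ee n ρ m U ↔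
      U = ρ⁻¹ • Matrix.vecMulVec m m
          - ((m ⬝ᵥ m) / ((n : ℝ) * ρ)) • (1 : Matrix (Fin n) (Fin n) ℝ)) := by
  have hnpos : (0:ℝ) < n := by
    have : (0:ℕ) < n := by omega
    exact_mod_cast this
  have hn0 : (n:ℝ) ≠ 0 := ne_of_gt hnpos
  have hρ0 : ρ ≠ 0 := ne_of_gt hρ
  set V := Matrix.vecMulVec m m with hV
  set A := ρ⁻¹ • V - U with hA
  set t : ℝ := (m ⬝ᵥ m) / ((n:ℝ) * ρ) with ht
  have htrA : A.trace = (m ⬝ᵥ m) * ρ⁻¹ := by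
    rw [hA, Matrix.trace_sub, Matrix.trace_smul, htr, hV, trace_vmv]
    simp [smul_eq_mul, mul_comm]
  have hee : ee n ρ m U = ((n:ℝ)/2) * lamMax A := rfl
  have htl : (m ⬝ᵥ m) * ρ⁻¹ ≤ (n:ℝ) * lamMax A := htrA ▸ trace_le A
  have hineq : (m ⬝ᵥ m) / (2 * ρ) ≤ ee n ρ m U := by
    rw [hee]
    rw [div_le_iff₀ (by positivity : (0:ℝ) < 2 * ρ)]
    have h2 : (m ⬝ᵥ m) * ρ⁻¹ * ρ = m ⬝ᵥ m := by field_simp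
    nlinarith [htl, hρ]
  refine ⟨hineq, ?_, ?_⟩
  · -- equality → U = ...
    intro heq
    have hL : lamMax A = t := by
      rw [hee] at heq
      rw [ht]
      field_simp at heq ⊢
      linarith
    -- B := t • 1 - A has nonneg quadratic form
    set B : Matrix (Fin n) (Fin n) ℝ := t • 1 - A with hB
    have hq1 : ∀ v : Fin n → ℝ, v ⬝ᵥ v = 1 → 0 ≤ v ⬝ᵥ B.mulVec v := by
      intro v hv
      have h1 : v ⬝ᵥ A.mulVec v ≤ t := hL ▸ ray_le_lamMax A hv
      have h2 : v ⬝ᵥ B.mulVec v = t - v ⬝ᵥ A.mulVec v := by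
        rw [hB, Matrix.sub_mulVec, dotProduct_sub, Matrix.smul_mulVec,
          Matrix.one_mulVec, dotProduct_smul, hv, smul_eq_mul, mul_one]
      linarith
    have hq : ∀ v : Fin n → ℝ, 0 ≤ v ⬝ᵥ B.mulVec v := quad_nonneg B hq1
    -- diagonal entries vanish
    have htrB : B.trace = 0 := by
      rw [hB, Matrix.trace_sub, Matrix.trace_smul, Matrix.trace_one, Fintype.card_fin, htrA]
      rw [ht]
      field_simp
      linear_combination ((m ⬝ᵥ m) * ((n:ℝ) * (n:ℝ)⁻¹)) * mul_inv_cancel₀ hρ0 + (m ⬝ᵥ m) * mul_inv_cancel₀ hn0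
    have hdiag : ∀ i, B i i = 0 := by
      have hsum : ∑ i : Fin n, B i i = 0 := by
        have : B.trace = ∑ i : Fin n, B i i := by simp [Matrix.trace, Matrix.diag]
        rw [← this, htrB]
      have hnn : ∀ i ∈ Finset.univ, (0:ℝ) ≤ B i i := by
        intro i _
        have := hq (Pi.single i 1)
        rwa [ray_single] at this
      intro i
      exact (Finset.sum_eq_zero_iff_of_nonneg hnn).mp hsum i (Finset.mem_univ i)
    -- symmetry of B
    have hVsym : V.IsSymm := by
      rw [hV]
      unfold Matrix.IsSymm
      ext i j
      simp [Matrix.vecMulVec_apply, mul_comm]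
    have hAsym : A.IsSymm := Matrix.IsSymm.sub (hVsym.smul ρ⁻¹) hsym
    have hBsym : B.IsSymm := Matrix.IsSymm.sub (Matrix.isSymm_one.smul t) hAsym
    have hBsym' : ∀ i j, B j i = B i j := fun i j => by
      conv_lhs => rw [← hBsym]
      rfl
    -- off-diagonal entries vanish
    have hoff : ∀ i j, B i j = 0 := by
      intro i j
      by_cases hij : i = j
      · rw [hij]; exact hdiag j
      · set y : ℝ := -(B i j) with hy
        set w : Fin n → ℝ := Pi.single i (1:ℝ) + Pi.single j y with hw
        have hval := hq w
        have hexp : w ⬝ᵥ B.mulVec w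
            = B i i + y * B i j + y * B j i + y * y * B j j := by
          rw [hw, Matrix.mulVec_add, dotProduct_add, add_dotProduct, add_dotProduct,
            ray_single' B i i 1 1, ray_single' B i j 1 y, ray_single' B j i y 1,
            ray_single' B j j y y]
          ring
        rw [hexp, hdiag i, hdiag j, hBsym' i j, hy] at hval
        nlinarith [hval]
    have hBzero : B = 0 := by
      ext i j
      exact hoff i j
    have hAeq : A = t • (1 : Matrix (Fin n) (Fin n) ℝ) := by
      have := hBzero
      rw [hB] at this
      linear_combination (norm := abel) -this
    rw [hA] at hAeq
    rw [← hAeq]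
    abel
  · -- U = ... → equality
    intro hU
    have hAeq : A = t • (1 : Matrix (Fin n) (Fin n) ℝ) := by
      rw [hA, hU]
      abel
    rw [hee, hAeq, lamMax_smul_one (by omega : 0 < n) t, ht]
    field_simp
end

section
/- For ρ > 0, m ∈ ℝⁿ and U a symmetric trace-free n×n matrix, the operator norm of U satisfies |U|_∞ ≤ 2·((n−1)/n)·e(ρ,m,U). -/
open Matrix

namespace OpNormEEAux

lemma rayleigh_set_bddAbove {n : ℕ} (A : Matrix (Fin n) (Fin n) ℝ) :
    BddAbove {r : ℝ | ∃ v : Fin n → ℝ, v ⬝ᵥ v = 1 ∧ r = v ⬝ᵥ A.mulVec v} := by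
  refine ⟨∑ i : Fin n, ∑ j : Fin n, |A i j|, ?_⟩
  rintro r ⟨v, hv, rfl⟩
  have habs : ∀ i, |v i| ≤ 1 := by
    intro i
    rw [abs_le_one_iff_mul_self_le_one]
    calc v i * v i ≤ ∑ j, v j * v j :=
          Finset.single_le_sum (f := fun j => v j * v j)
            (fun j _ => mul_self_nonneg _) (Finset.mem_univ i)
      _ = 1 := hv
  calc v ⬝ᵥ A.mulVec v ≤ |v ⬝ᵥ A.mulVec v| := le_abs_self _
    _ ≤ ∑ i, |v i * (A.mulVec v) i| := Finset.abs_sum_le_sum_abs _ _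
    _ ≤ ∑ i, ∑ j, |A i j| := by
        apply Finset.sum_le_sum
        intro i _
        calc |v i * (A.mulVec v) i| = |v i| * |∑ j, A i j * v j| := by
              rw [abs_mul]; rfl
          _ ≤ 1 * ∑ j, |A i j * v j| :=
              mul_le_mul (habs i) (Finset.abs_sum_le_sum_abs _ _) (abs_nonneg _)
                zero_le_one
          _ = ∑ j, |A i j| * |v j| := by rw [one_mul]; simp [abs_mul]
          _ ≤ ∑ j, |A i j| * 1 :=
              Finset.sum_le_sum fun j _ =>
                mul_le_mul_of_nonneg_left (habs j) (abs_nonneg _)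
          _ = ∑ j, |A i j| := by simp

lemma le_lamMax {n : ℕ} (A : Matrix (Fin n) (Fin n) ℝ) {v : Fin n → ℝ}
    (hv : v ⬝ᵥ v = 1) : v ⬝ᵥ A.mulVec v ≤ lamMax A :=
  le_csSup (rayleigh_set_bddAbove A) ⟨v, hv, rfl⟩

lemma rayleigh_vecMulVec {n : ℕ} (m w : Fin n → ℝ) :
    w ⬝ᵥ (Matrix.vecMulVec m m).mulVec w = (m ⬝ᵥ w) * (m ⬝ᵥ w) := by
  simp only [dotProduct, Matrix.mulVec, Matrix.vecMulVec_apply, Finset.mul_sum,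
    Finset.sum_mul]
  rw [Finset.sum_comm]
  congr 1; ext i; congr 1; ext j; ring

/-- For unit vectors `w`, `-(w ⬝ᵥ U w) ≤ λ_max(ρ⁻¹ m mᵀ - U)`. -/
lemma neg_rayleigh_le {n : ℕ} {ρ : ℝ} (hρ : 0 < ρ) (m : Fin n → ℝ)
    (U : Matrix (Fin n) (Fin n) ℝ) {w : Fin n → ℝ} (hw : w ⬝ᵥ w = 1) :
    -(w ⬝ᵥ U.mulVec w) ≤ lamMax (ρ⁻¹ • Matrix.vecMulVec m m - U) := by
  have h := le_lamMax (ρ⁻¹ • Matrix.vecMulVec m m - U) hw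
  have hcalc : w ⬝ᵥ (ρ⁻¹ • Matrix.vecMulVec m m - U).mulVec w
      = ρ⁻¹ * ((m ⬝ᵥ w) * (m ⬝ᵥ w)) - w ⬝ᵥ U.mulVec w := by
    rw [Matrix.sub_mulVec, dotProduct_sub, Matrix.smul_mulVec,
      dotProduct_smul, rayleigh_vecMulVec]
    rfl
  have hpos : 0 ≤ ρ⁻¹ * ((m ⬝ᵥ w) * (m ⬝ᵥ w)) :=
    mul_nonneg (inv_nonneg.mpr hρ.le) (mul_self_nonneg _)
  nlinarith [h, hcalc]

/-- Sum of Rayleigh quotients over an orthonormal basis equals the trace. -/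
lemma sum_rayleigh_basis {n : ℕ} (U : Matrix (Fin n) (Fin n) ℝ)
    (b : OrthonormalBasis (Fin n) ℝ (EuclideanSpace ℝ (Fin n))) :
    ∑ i : Fin n, (fun j => b i j) ⬝ᵥ U.mulVec (fun j => b i j) = U.trace := by
  classical
  set B : Matrix (Fin n) (Fin n) ℝ := Matrix.of (fun i j => b i j) with hB
  have horth : B * Bᵀ = 1 := by
    ext i k
    have := b.orthonormal
    rw [orthonormal_iff_ite] at this
    have h := this i k
    simp only [PiLp.inner_apply, RCLike.inner_apply, starRingEnd_apply, star_trivial] at h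
    simp only [Matrix.mul_apply, Matrix.transpose_apply, Matrix.one_apply, hB, Matrix.of_apply]
    rw [← h]; exact Finset.sum_congr rfl fun _ _ => mul_comm _ _
  have horth' : Bᵀ * B = 1 := mul_eq_one_comm.mp horth
  have hdiag : ∀ i, (fun j => b i j) ⬝ᵥ U.mulVec (fun j => b i j)
      = (B * U * Bᵀ) i i := by
    intro i
    simp only [Matrix.mul_apply, dotProduct, Matrix.mulVec, Matrix.transpose_apply,
      hB, Matrix.of_apply, dotProduct, Finset.sum_mul, Finset.mul_sum]
    rw [Finset.sum_comm]
    congr 1; ext j; congr 1; ext k; ring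
  calc ∑ i : Fin n, (fun j => b i j) ⬝ᵥ U.mulVec (fun j => b i j)
      = ∑ i, (B * U * Bᵀ) i i := by exact Finset.sum_congr rfl fun i _ => hdiag i
    _ = (B * U * Bᵀ).trace := rfl
    _ = (Bᵀ * (B * U)).trace := Matrix.trace_mul_comm _ _
    _ = ((Bᵀ * B) * U).trace := by rw [Matrix.mul_assoc]
    _ = U.trace := by rw [horth', Matrix.one_mul]

lemma exists_basis_extending {n : ℕ} (hn : 1 ≤ n) {v : Fin n → ℝ} (hv : v ⬝ᵥ v = 1) :
    ∃ b : OrthonormalBasis (Fin n) ℝ (EuclideanSpace ℝ (Fin n)),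
      (fun j => b ⟨0, hn⟩ j) = v := by
  classical
  set V : EuclideanSpace ℝ (Fin n) := (WithLp.equiv 2 (Fin n → ℝ)).symm v with hV
  have hVi : ∀ i, V i = v i := fun i => rfl
  have hinner : (inner ℝ V V : ℝ) = 1 := by
    simp only [PiLp.inner_apply, RCLike.inner_apply, starRingEnd_apply, star_trivial, hVi]
    exact hv
  have hnorm : ‖V‖ = 1 := by
    have h := real_inner_self_eq_norm_mul_norm V
    rw [hinner] at h
    nlinarith [norm_nonneg V]
  have hcard : Module.finrank ℝ (EuclideanSpace ℝ (Fin n)) = Fintype.card (Fin n) := by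
    simp [finrank_euclideanSpace_fin]
  have horth : Orthonormal ℝ (({⟨0, hn⟩} : Set (Fin n)).restrict (fun _ => V)) := by
    constructor
    · intro i; exact hnorm
    · intro i j hij
      exact absurd (Subtype.ext ((i.2 : i.1 ∈ _).trans ((j.2 : j.1 ∈ _)).symm)) hij
  obtain ⟨b, hb⟩ := horth.exists_orthonormalBasis_extension_of_card_eq hcard
  refine ⟨b, ?_⟩
  have h0 := hb ⟨0, hn⟩ rfl
  funext j
  rw [h0]
  exact hVi j

end OpNormEEAux

/-- |U|_∞ ≤ 2((n−1)/n)·e(ρ,m,U). -/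
theorem opNorm_le_ee (n : ℕ) (hn : 2 ≤ n) (ρ : ℝ) (hρ : 0 < ρ)
    (m : Fin n → ℝ) (U : Matrix (Fin n) (Fin n) ℝ)
    (hsym : U.IsSymm) (htr : U.trace = 0) :
    opNorm U ≤ 2 * (((n : ℝ) - 1) / (n : ℝ)) * ee n ρ m U := by
  classical
  have hn1 : 1 ≤ n := le_trans (by norm_num) hn
  set A : Matrix (Fin n) (Fin n) ℝ := ρ⁻¹ • Matrix.vecMulVec m m - U with hA
  set L : ℝ := lamMax A with hL
  -- L ≥ 0
  have hLnonneg : 0 ≤ L := by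
    have hdiag : ∃ i : Fin n, U i i ≤ 0 := by
      by_contra h
      push_neg at h
      have : 0 < U.trace := by
        have : 0 < ∑ i : Fin n, U i i :=
          Finset.sum_pos (fun i _ => h i) ⟨⟨0, hn1⟩, Finset.mem_univ _⟩
        simpa [Matrix.trace, Matrix.diag] using this
      exact absurd htr (ne_of_gt this)
    obtain ⟨i, hi⟩ := hdiag
    set e : Fin n → ℝ := Pi.single i 1 with he
    have hee : e ⬝ᵥ e = 1 := by simp [he, dotProduct, Pi.single_apply]
    have h1 := OpNormEEAux.le_lamMax A hee
    have h2 : e ⬝ᵥ A.mulVec e = ρ⁻¹ * ((m ⬝ᵥ e) * (m ⬝ᵥ e)) - e ⬝ᵥ U.mulVec e := by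
      rw [hA, Matrix.sub_mulVec, dotProduct_sub, Matrix.smul_mulVec,
        dotProduct_smul, OpNormEEAux.rayleigh_vecMulVec]
      rfl
    have h3 : e ⬝ᵥ U.mulVec e = U i i := by
      simp [he, dotProduct, Matrix.mulVec, Pi.single_apply]
    have hpos : 0 ≤ ρ⁻¹ * ((m ⬝ᵥ e) * (m ⬝ᵥ e)) :=
      mul_nonneg (inv_nonneg.mpr hρ.le) (mul_self_nonneg _)
    nlinarith [h1, h2, h3]
  -- key bound : for all unit v, |v ⬝ᵥ U v| ≤ (n-1) L
  have hkey : ∀ v : Fin n → ℝ, v ⬝ᵥ v = 1 →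
      |v ⬝ᵥ U.mulVec v| ≤ ((n : ℝ) - 1) * L := by
    intro v hv
    have hns : (1 : ℝ) ≤ (n : ℝ) - 1 := by
      have : (2 : ℝ) ≤ (n : ℝ) := by exact_mod_cast hn
      linarith
    have hneg : -(v ⬝ᵥ U.mulVec v) ≤ L := OpNormEEAux.neg_rayleigh_le hρ m U hv
    -- positive side via orthonormal basis
    set i0 : Fin n := ⟨0, hn1⟩ with hi0
    obtain ⟨b, hb0⟩ := OpNormEEAux.exists_basis_extending hn1 hv
    have hsum := OpNormEEAux.sum_rayleigh_basis U b
    rw [htr] at hsum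
    have hunit : ∀ i : Fin n, (fun j => b i j) ⬝ᵥ (fun j => b i j) = 1 := by
      intro i
      have := b.orthonormal
      rw [orthonormal_iff_ite] at this
      have h := this i i
      simp only [PiLp.inner_apply, RCLike.inner_apply, starRingEnd_apply, star_trivial,
        if_pos rfl] at h
      simpa [dotProduct] using h
    have hsplit : v ⬝ᵥ U.mulVec v
        = -∑ i ∈ Finset.univ.erase i0,
            (fun j => b i j) ⬝ᵥ U.mulVec (fun j => b i j) := by
      have h := Finset.add_sum_erase Finset.univ
        (fun i => (fun j => b i j) ⬝ᵥ U.mulVec (fun j => b i j))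
        (Finset.mem_univ i0)
      beta_reduce at h
      rw [hb0] at h
      linarith [hsum, h]
    have hbound : -∑ i ∈ Finset.univ.erase i0,
          (fun j => b i j) ⬝ᵥ U.mulVec (fun j => b i j) ≤ ((n : ℝ) - 1) * L := by
      rw [← Finset.sum_neg_distrib]
      calc ∑ i ∈ Finset.univ.erase i0,
            -((fun j => b i j) ⬝ᵥ U.mulVec (fun j => b i j))
          ≤ ∑ _i ∈ Finset.univ.erase i0, L :=
            Finset.sum_le_sum fun i _ =>
              OpNormEEAux.neg_rayleigh_le hρ m U (hunit i)
        _ = ((Finset.univ.erase i0).card : ℝ) * L := by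
            rw [Finset.sum_const, nsmul_eq_mul]
        _ = ((n : ℝ) - 1) * L := by
            rw [Finset.card_erase_of_mem (Finset.mem_univ _)]
            simp only [Finset.card_univ, Fintype.card_fin]
            rw [Nat.cast_sub hn1]
            norm_num
    have hpos' : v ⬝ᵥ U.mulVec v ≤ ((n : ℝ) - 1) * L := hsplit ▸ hbound
    have hneg' : -(v ⬝ᵥ U.mulVec v) ≤ ((n : ℝ) - 1) * L := by
      calc -(v ⬝ᵥ U.mulVec v) ≤ L := hneg
        _ ≤ ((n : ℝ) - 1) * L := by nlinarith
    exact abs_le.mpr ⟨by linarith, hpos'⟩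
  -- conclude via csSup_le
  have hnzero : (n : ℝ) ≠ 0 := by positivity
  have hrhs : 2 * (((n : ℝ) - 1) / (n : ℝ)) * ee n ρ m U = ((n : ℝ) - 1) * L := by
    rw [ee, ← hA, ← hL]
    field_simp
  rw [hrhs]
  apply csSup_le
  · refine ⟨|(Pi.single (⟨0, hn1⟩ : Fin n) 1 : Fin n → ℝ) ⬝ᵥ
      U.mulVec (Pi.single ⟨0, hn1⟩ 1)|, Pi.single ⟨0, hn1⟩ 1, ?_, rfl⟩
    simp [dotProduct, Pi.single_apply]
  · rintro r ⟨v, hv, rfl⟩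
    exact hkey v hv
end

section
/- For fixed ρ > 0 and r > 0, the convex hull of the set K_{ρ,r} := {(m,U) : |m| = r, U = m⊗m/ρ − (|m|²/(nρ))·I_n} equals the set {(m,U) ∈ ℝⁿ×S₀ⁿˣⁿ : e(ρ,m,U) ≤ r²/(2ρ)}. -/
open Matrix

/-- The constraint set K_{ρ,r}. -/
def Kset (n : ℕ) (ρ r : ℝ) : Set ((Fin n → ℝ) × Matrix (Fin n) (Fin n) ℝ) :=
  {z | z.1 ⬝ᵥ z.1 = r ^ 2 ∧
    z.2 = ρ⁻¹ • Matrix.vecMulVec z.1 z.1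
        - ((z.1 ⬝ᵥ z.1) / ((n : ℝ) * ρ)) • (1 : Matrix (Fin n) (Fin n) ℝ)}

namespace ConvKAux

variable {n : ℕ}

lemma vecMulVec_mulVec_eq (m v : Fin n → ℝ) :
    (Matrix.vecMulVec m m) *ᵥ v = (m ⬝ᵥ v) • m := by
  ext i
  simp [Matrix.mulVec, Matrix.vecMulVec, dotProduct, Finset.mul_sum, mul_comm, mul_left_comm]

lemma rayleigh_expand (ρ : ℝ) (m v : Fin n → ℝ) (U : Matrix (Fin n) (Fin n) ℝ) :
    v ⬝ᵥ (ρ⁻¹ • Matrix.vecMulVec m m - U) *ᵥ v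
      = ρ⁻¹ * (m ⬝ᵥ v) ^ 2 - v ⬝ᵥ U *ᵥ v := by
  rw [Matrix.sub_mulVec, dotProduct_sub, Matrix.smul_mulVec, dotProduct_smul,
    vecMulVec_mulVec_eq, dotProduct_smul, dotProduct_comm v m]
  simp only [smul_eq_mul]
  ring

lemma exists_unit_vec (hn : 0 < n) : ∃ v : Fin n → ℝ, v ⬝ᵥ v = 1 := by
  refine ⟨fun i => if i = ⟨0, hn⟩ then 1 else 0, ?_⟩
  simp [dotProduct, ite_and]

lemma rayleigh_bddAbove (A : Matrix (Fin n) (Fin n) ℝ) :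
    BddAbove {r : ℝ | ∃ v : Fin n → ℝ, v ⬝ᵥ v = 1 ∧ r = v ⬝ᵥ A.mulVec v} := by
  refine ⟨∑ i, ∑ j, |A i j|, ?_⟩
  rintro x ⟨v, hv, rfl⟩
  have habs : ∀ i, |v i| ≤ 1 := by
    intro i
    have h1 : v i * v i ≤ 1 := by
      rw [← hv]
      have : ∀ j ∈ Finset.univ, 0 ≤ v j * v j := fun j _ => mul_self_nonneg _
      simpa [dotProduct] using Finset.single_le_sum this (Finset.mem_univ i)
    nlinarith [abs_nonneg (v i), abs_mul_abs_self (v i)]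
  have : v ⬝ᵥ A *ᵥ v = ∑ i, ∑ j, v i * A i j * v j := by
    simp [dotProduct, Matrix.mulVec, Finset.mul_sum, mul_assoc]
  rw [this]
  calc ∑ i, ∑ j, v i * A i j * v j ≤ ∑ i, ∑ j, |v i * A i j * v j| :=
        Finset.sum_le_sum fun i _ => Finset.sum_le_sum fun j _ => le_abs_self _
    _ ≤ ∑ i, ∑ j, |A i j| := by
        refine Finset.sum_le_sum fun i _ => Finset.sum_le_sum fun j _ => ?_
        rw [abs_mul, abs_mul]
        calc |v i| * |A i j| * |v j| ≤ 1 * |A i j| * 1 :=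
              mul_le_mul (mul_le_mul (habs i) le_rfl (abs_nonneg _)
                (by linarith [habs i, abs_nonneg (v i)]))
                (habs j) (abs_nonneg _) (by positivity)
          _ = |A i j| := by ring

lemma rayleigh_le_lamMax (A : Matrix (Fin n) (Fin n) ℝ) {v : Fin n → ℝ} (hv : v ⬝ᵥ v = 1) :
    v ⬝ᵥ A *ᵥ v ≤ lamMax A :=
  le_csSup (rayleigh_bddAbove A) ⟨v, hv, rfl⟩

lemma lamMax_le (hn : 0 < n) (A : Matrix (Fin n) (Fin n) ℝ) {c : ℝ}
    (h : ∀ v : Fin n → ℝ, v ⬝ᵥ v = 1 → v ⬝ᵥ A *ᵥ v ≤ c) : lamMax A ≤ c := by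
  apply csSup_le
  · obtain ⟨v, hv⟩ := exists_unit_vec hn
    exact ⟨_, v, hv, rfl⟩
  · rintro x ⟨v, hv, rfl⟩; exact h v hv

lemma lamMax_smul_one (hn : 0 < n) (c : ℝ) :
    lamMax (c • (1 : Matrix (Fin n) (Fin n) ℝ)) = c := by
  have : {r : ℝ | ∃ v : Fin n → ℝ, v ⬝ᵥ v = 1 ∧
      r = v ⬝ᵥ (c • (1 : Matrix (Fin n) (Fin n) ℝ)) *ᵥ v} = {c} := by
    ext x
    simp only [Set.mem_setOf_eq, Set.mem_singleton_iff]
    constructor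
    · rintro ⟨v, hv, rfl⟩
      rw [Matrix.smul_mulVec, dotProduct_smul, Matrix.one_mulVec, smul_eq_mul, hv, mul_one]
    · rintro rfl
      obtain ⟨v, hv⟩ := exists_unit_vec hn
      exact ⟨v, hv, by
        rw [Matrix.smul_mulVec, dotProduct_smul, Matrix.one_mulVec, smul_eq_mul, hv,
          mul_one]⟩
  rw [lamMax, this, csSup_singleton]

lemma vecMulVec_isSymm (m : Fin n → ℝ) : (Matrix.vecMulVec m m).IsSymm := by
  ext i j; simp [Matrix.vecMulVec, Matrix.transpose_apply, mul_comm]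

lemma trace_vecMulVec (m : Fin n → ℝ) : (Matrix.vecMulVec m m).trace = m ⬝ᵥ m := by
  simp [Matrix.trace, Matrix.vecMulVec, Matrix.diag, dotProduct]

lemma ee_le_iff (hn : 0 < n) {ρ r : ℝ} (hρ : 0 < ρ) (m : Fin n → ℝ)
    (U : Matrix (Fin n) (Fin n) ℝ) :
    ee n ρ m U ≤ r ^ 2 / (2 * ρ) ↔
      ∀ v : Fin n → ℝ, v ⬝ᵥ v = 1 →
        ρ⁻¹ * (m ⬝ᵥ v) ^ 2 - v ⬝ᵥ U *ᵥ v ≤ r ^ 2 / ((n : ℝ) * ρ) := by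
  have hn0 : (0:ℝ) < (n : ℝ) := by exact_mod_cast hn
  have key : r ^ 2 / (2 * ρ) = ((n : ℝ) / 2) * (r ^ 2 / ((n : ℝ) * ρ)) := by
    field_simp
  constructor
  · intro h v hv
    rw [← rayleigh_expand]
    have h1 := rayleigh_le_lamMax (ρ⁻¹ • Matrix.vecMulVec m m - U) hv
    have h2 : lamMax (ρ⁻¹ • Matrix.vecMulVec m m - U) ≤ r ^ 2 / ((n : ℝ) * ρ) := by
      rw [key] at h
      unfold ee at h
      have hhalf : (0:ℝ) < (n : ℝ) / 2 := by positivity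
      exact le_of_mul_le_mul_left h hhalf
    linarith
  · intro h
    unfold ee
    rw [key]
    have : lamMax (ρ⁻¹ • Matrix.vecMulVec m m - U) ≤ r ^ 2 / ((n : ℝ) * ρ) := by
      apply lamMax_le hn
      intro v hv
      rw [rayleigh_expand]
      exact h v hv
    have hhalf : (0:ℝ) ≤ (n : ℝ) / 2 := by positivity
    exact mul_le_mul_of_nonneg_left this hhalf

lemma single_ray (A : Matrix (Fin n) (Fin n) ℝ) (i j : Fin n) :
    (Pi.single i 1 : Fin n → ℝ) ⬝ᵥ A *ᵥ (Pi.single j 1 : Fin n → ℝ) = A i j := by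
  simp [dotProduct, Matrix.mulVec, Pi.single_apply]

lemma psd_trace_zero {A : Matrix (Fin n) (Fin n) ℝ} (hsym : A.IsSymm)
    (hpsd : ∀ v : Fin n → ℝ, 0 ≤ v ⬝ᵥ A *ᵥ v) (htr : A.trace = 0) : A = 0 := by
  have hdiag : ∀ i, A i i = 0 := by
    have h0 : ∀ i ∈ Finset.univ, (0:ℝ) ≤ A i i := by
      intro i _
      simpa [single_ray] using hpsd (Pi.single i 1)
    intro i
    have := (Finset.sum_eq_zero_iff_of_nonneg h0).1
      (by simpa [Matrix.trace, Matrix.diag] using htr)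
    exact this i (Finset.mem_univ i)
  ext i j
  have hray : ∀ t : ℝ, 0 ≤ t * A i j + t * A j i := by
    intro t
    have := hpsd (t • (Pi.single i 1 : Fin n → ℝ) + (Pi.single j 1 : Fin n → ℝ))
    rw [Matrix.mulVec_add, Matrix.mulVec_smul, dotProduct_add, add_dotProduct,
      add_dotProduct, dotProduct_smul, dotProduct_smul, smul_dotProduct,
      smul_dotProduct] at this
    simp only [single_ray, smul_eq_mul] at this
    rw [hdiag i, hdiag j] at this
    nlinarith [this]
  have hsymm : A j i = A i j := by
    have := congrFun (congrFun hsym j) i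
    simpa [Matrix.transpose_apply] using this.symm
  have := hray (-(A i j))
  rw [hsymm] at this
  have h2 : A i j ^ 2 ≤ 0 := by nlinarith
  have := sq_nonneg (A i j)
  simp only [Matrix.zero_apply]
  nlinarith

open scoped MatrixOrder in
lemma psd_rank_one_decomp (C : Matrix (Fin n) (Fin n) ℝ) (hC : C.PosSemidef) :
    ∃ g : Fin n → (Fin n → ℝ), C = ∑ j, Matrix.vecMulVec (g j) (g j) := by
  refine ⟨fun j i => CFC.sqrt C i j, ?_⟩
  have hS : CFC.sqrt C * CFC.sqrt C = C := CFC.sqrt_mul_sqrt_self C hC.nonneg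
  have hsym : (CFC.sqrt C).IsSymm := by
    have h := (CFC.sqrt_nonneg C).posSemidef.isHermitian
    rwa [Matrix.IsHermitian, Matrix.conjTranspose_eq_transpose_of_trivial] at h
  conv_lhs => rw [← hS]
  ext i k
  simp only [Matrix.mul_apply, Matrix.sum_apply, Matrix.vecMulVec_apply]
  refine Finset.sum_congr rfl fun j _ => ?_
  have : CFC.sqrt C j k = CFC.sqrt C k j := by
    conv_lhs => rw [← hsym]
    rw [Matrix.transpose_apply]
  rw [this]

lemma dot_expand (m w : Fin n → ℝ) (t : ℝ) :
    (m + t • w) ⬝ᵥ (m + t • w) = m ⬝ᵥ m + 2 * t * (m ⬝ᵥ w) + t ^ 2 * (w ⬝ᵥ w) := by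
  rw [dotProduct_add, add_dotProduct, add_dotProduct, dotProduct_smul, smul_dotProduct,
    smul_dotProduct, dotProduct_smul, dotProduct_comm w m]
  simp only [smul_eq_mul]
  ring

end ConvKAux

namespace ConvKAux

set_option maxHeartbeats 2000000 in
lemma hard_dir {n : ℕ} (hn : 2 ≤ n) {ρ r : ℝ} (hρ : 0 < ρ) (hr : 0 < r)
    (m : Fin n → ℝ) (U : Matrix (Fin n) (Fin n) ℝ)
    (hsym : U.IsSymm) (htr : U.trace = 0)
    (he : ∀ v : Fin n → ℝ, v ⬝ᵥ v = 1 →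
      ρ⁻¹ * (m ⬝ᵥ v) ^ 2 - v ⬝ᵥ U *ᵥ v ≤ r ^ 2 / ((n : ℝ) * ρ)) :
    (m, U) ∈ convexHull ℝ (Kset n ρ r) := by
  classical
  have hn0 : 0 < n := by omega
  have hnR : (0:ℝ) < n := by exact_mod_cast hn0
  set κ : ℝ := r ^ 2 / ((n : ℝ) * ρ) with hκ
  set A : Matrix (Fin n) (Fin n) ℝ := κ • 1 - (ρ⁻¹ • Matrix.vecMulVec m m - U) with hA
  have hA_ray : ∀ v : Fin n → ℝ, v ⬝ᵥ A *ᵥ v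
      = κ * (v ⬝ᵥ v) - (ρ⁻¹ * (m ⬝ᵥ v) ^ 2 - v ⬝ᵥ U *ᵥ v) := by
    intro v
    rw [hA, Matrix.sub_mulVec, dotProduct_sub, rayleigh_expand,
      Matrix.smul_mulVec, dotProduct_smul, Matrix.one_mulVec, smul_eq_mul]
  have hdot_nonneg : ∀ v : Fin n → ℝ, 0 ≤ v ⬝ᵥ v := by
    intro v
    simp only [dotProduct]
    exact Finset.sum_nonneg fun i _ => mul_self_nonneg _
  have hA_unit : ∀ v : Fin n → ℝ, v ⬝ᵥ v = 1 → 0 ≤ v ⬝ᵥ A *ᵥ v := by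
    intro v hv
    rw [hA_ray, hv, mul_one]
    linarith [he v hv]
  have hA_psd : ∀ v : Fin n → ℝ, 0 ≤ v ⬝ᵥ A *ᵥ v := by
    intro v
    by_cases hv : v ⬝ᵥ v = 0
    · have hv0 : v = 0 := dotProduct_self_eq_zero.mp hv
      simp [hv0]
    · have hvpos : 0 < v ⬝ᵥ v := lt_of_le_of_ne (hdot_nonneg v) (Ne.symm hv)
      set a : ℝ := (Real.sqrt (v ⬝ᵥ v))⁻¹ with ha
      have hspos : 0 < Real.sqrt (v ⬝ᵥ v) := Real.sqrt_pos.mpr hvpos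
      have hapos : 0 < a := by rw [ha]; exact inv_pos.mpr hspos
      have hsq : Real.sqrt (v ⬝ᵥ v) ^ 2 = v ⬝ᵥ v := Real.sq_sqrt (hdot_nonneg v)
      have hu : (a • v) ⬝ᵥ (a • v) = 1 := by
        rw [smul_dotProduct, dotProduct_smul, smul_eq_mul, smul_eq_mul, ha]
        field_simp
        exact hsq.symm
      have h0 := hA_unit (a • v) hu
      rw [Matrix.mulVec_smul, smul_dotProduct, dotProduct_smul, smul_eq_mul,
        smul_eq_mul] at h0
      nlinarith [h0, hapos, mul_pos hapos hapos]
  have hAsym : A.IsSymm := by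
    rw [hA]
    exact (Matrix.isSymm_one.smul κ).sub (((vecMulVec_isSymm m).smul ρ⁻¹).sub hsym)
  have hAtr : A.trace = κ * n - ρ⁻¹ * (m ⬝ᵥ m) := by
    rw [hA, Matrix.trace_sub, Matrix.trace_sub, Matrix.trace_smul, Matrix.trace_smul,
      Matrix.trace_one, trace_vecMulVec, htr]
    simp [smul_eq_mul, Fintype.card_fin]
  have hAtr_nonneg : 0 ≤ A.trace := by
    rw [Matrix.trace]
    exact Finset.sum_nonneg fun i _ => by
      simpa [Matrix.diag, single_ray] using hA_psd (Pi.single i 1)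
  have hκn : κ * n = r ^ 2 / ρ := by
    rw [hκ]; field_simp
  have hmm_le : m ⬝ᵥ m ≤ r ^ 2 := by
    rw [hAtr, hκn] at hAtr_nonneg
    rw [div_eq_inv_mul] at hAtr_nonneg
    nlinarith [hAtr_nonneg, inv_pos.mpr hρ]
  by_cases hcase : m ⬝ᵥ m = r ^ 2
  · have hAzero : A = 0 := by
      apply psd_trace_zero hAsym hA_psd
      rw [hAtr, hcase, hκn, div_eq_inv_mul]
      ring
    have hU : U = ρ⁻¹ • Matrix.vecMulVec m m - κ • 1 := by
      have h2 : κ • (1 : Matrix (Fin n) (Fin n) ℝ)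
          = ρ⁻¹ • Matrix.vecMulVec m m - U := sub_eq_zero.mp (hA ▸ hAzero)
      rw [h2, sub_sub_cancel]
    apply subset_convexHull
    refine ⟨hcase, ?_⟩
    rw [hU, hcase, hκ]
  · have hlt : m ⬝ᵥ m < r ^ 2 := lt_of_le_of_ne hmm_le hcase
    set R2 : ℝ := r ^ 2 - m ⬝ᵥ m with hR2
    have hR2pos : 0 < R2 := by rw [hR2]; linarith
    set C : Matrix (Fin n) (Fin n) ℝ := ρ • A with hCdef
    have hCpsd : C.PosSemidef := by
      refine Matrix.PosSemidef.of_dotProduct_mulVec_nonneg ?_ ?_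
      · rw [Matrix.IsHermitian, Matrix.conjTranspose_eq_transpose_of_trivial]
        exact hAsym.smul ρ
      · intro x
        have hst : star x = x := by funext i; exact star_trivial _
        rw [hst, hCdef, Matrix.smul_mulVec, dotProduct_smul, smul_eq_mul]
        exact mul_nonneg hρ.le (hA_psd x)
    have hCtr : C.trace = R2 := by
      rw [hCdef, Matrix.trace_smul, hAtr, smul_eq_mul, hR2, hκn]
      field_simp
    obtain ⟨g, hg⟩ := psd_rank_one_decomp C hCpsd
    set c : Fin n → ℝ := fun j => g j ⬝ᵥ g j with hc
    have hc0 : ∀ j, 0 ≤ c j := fun j => hdot_nonneg (g j)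
    have hsumc : ∑ j, c j = R2 := by
      have h1 : C.trace = ∑ j, c j := by
        rw [hg, Matrix.trace_sum]
        exact Finset.sum_congr rfl fun j _ => trace_vecMulVec (g j)
      rw [← h1, hCtr]
    set e0 : Fin n → ℝ := Pi.single (⟨0, hn0⟩ : Fin n) 1 with he0
    have he0unit : e0 ⬝ᵥ e0 = 1 := by
      rw [he0]
      simp [dotProduct, Pi.single_apply]
    set w : Fin n → Fin n → ℝ :=
      fun j => if c j = 0 then e0 else (Real.sqrt (c j))⁻¹ • g j with hw
    have hwunit : ∀ j, w j ⬝ᵥ w j = 1 := by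
      intro j
      rw [hw]
      by_cases h : c j = 0
      · simpa [h] using he0unit
      · have hcpos : 0 < c j := lt_of_le_of_ne (hc0 j) (Ne.symm h)
        have hsq : Real.sqrt (c j) ^ 2 = c j := Real.sq_sqrt (hc0 j)
        have hsne : Real.sqrt (c j) ≠ 0 := by positivity
        simp only [h, if_false]
        rw [smul_dotProduct, dotProduct_smul, smul_eq_mul, smul_eq_mul]
        have hgj : g j ⬝ᵥ g j = c j := rfl
        rw [hgj]
        field_simp
        exact hsq.symm
    have hcw : ∀ j, c j • Matrix.vecMulVec (w j) (w j) = Matrix.vecMulVec (g j) (g j) := by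
      intro j
      rw [hw]
      by_cases h : c j = 0
      · have hg0 : g j = 0 := by
          apply dotProduct_self_eq_zero.mp
          rw [show g j ⬝ᵥ g j = c j from rfl, h]
        simp only [h, if_true, hg0]
        ext i k
        simp [Matrix.vecMulVec_apply]
      · have hcpos : 0 < c j := lt_of_le_of_ne (hc0 j) (Ne.symm h)
        have hsq : Real.sqrt (c j) ^ 2 = c j := Real.sq_sqrt (hc0 j)
        have hsne : Real.sqrt (c j) ≠ 0 := by positivity
        simp only [h, if_false]
        ext i k
        simp only [Matrix.smul_apply, Matrix.vecMulVec_apply, Pi.smul_apply, smul_eq_mul]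
        field_simp
        rw [hsq]
    set sj : Fin n → ℝ := fun j => m ⬝ᵥ w j with hsj
    set q : Fin n → ℝ := fun j => Real.sqrt (sj j ^ 2 + R2) with hqd
    have hq2 : ∀ j, q j ^ 2 = sj j ^ 2 + R2 := by
      intro j
      rw [hqd]
      exact Real.sq_sqrt (by positivity)
    have hqpos : ∀ j, 0 < q j := by
      intro j
      rw [hqd]
      apply Real.sqrt_pos.mpr
      positivity
    have hbpos : ∀ j, 0 < q j - sj j := by
      intro j
      nlinarith [hq2 j, hqpos j, hR2pos]
    have hgpos : ∀ j, 0 < q j + sj j := by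
      intro j
      nlinarith [hq2 j, hqpos j, hR2pos]
    set t : Fin n × Bool → ℝ :=
      fun p => if p.2 then q p.1 - sj p.1 else -(q p.1 + sj p.1) with ht
    set x : Fin n × Bool → (Fin n → ℝ) := fun p => m + t p • w p.1 with hx
    set wt : Fin n × Bool → ℝ :=
      fun p => if p.2 then c p.1 / R2 * (q p.1 + sj p.1) / (2 * q p.1)
        else c p.1 / R2 * (q p.1 - sj p.1) / (2 * q p.1) with hwt
    set z : Fin n × Bool → (Fin n → ℝ) × Matrix (Fin n) (Fin n) ℝ :=
      fun p => (x p, ρ⁻¹ • Matrix.vecMulVec (x p) (x p) - κ • 1) with hz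
    have hwt0 : ∀ p, 0 ≤ wt p := by
      rintro ⟨j, b⟩
      rw [hwt]
      cases b
      · simp only [Bool.false_eq_true, if_false]
        apply div_nonneg _ (by linarith [hqpos j])
        exact mul_nonneg (div_nonneg (hc0 j) hR2pos.le) (hbpos j).le
      · simp only [if_true]
        apply div_nonneg _ (by linarith [hqpos j])
        exact mul_nonneg (div_nonneg (hc0 j) hR2pos.le) (hgpos j).le
    have hxnorm : ∀ p, x p ⬝ᵥ x p = r ^ 2 := by
      rintro ⟨j, b⟩
      rw [hx]
      simp only
      rw [dot_expand, hwunit j]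
      have hms : m ⬝ᵥ w j = sj j := rfl
      rw [hms, ht]
      cases b
      · simp only [Bool.false_eq_true, if_false]
        nlinarith [hq2 j]
      · simp only [if_true]
        nlinarith [hq2 j]
    have hzK : ∀ p, z p ∈ Kset n ρ r := by
      intro p
      refine ⟨hxnorm p, ?_⟩
      rw [hz]
      simp only
      rw [hxnorm p, hκ]
    have hwt_pair : ∀ j, wt (j, true) + wt (j, false) = c j / R2 := by
      intro j
      rw [hwt]
      simp only [if_true, Bool.false_eq_true, if_false]
      have := hqpos j
      field_simp
      ring
    have hsum_wt : ∑ p : Fin n × Bool, wt p = 1 := by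
      rw [Fintype.sum_prod_type]
      have h1 : ∀ j, ∑ b : Bool, wt (j, b) = c j / R2 := by
        intro j
        rw [Fintype.sum_bool]
        exact hwt_pair j
      rw [Finset.sum_congr rfl fun j _ => h1 j, ← Finset.sum_div, hsumc,
        div_self hR2pos.ne']
    have key_fst : ∀ j, wt (j, true) • x (j, true) + wt (j, false) • x (j, false)
        = (c j / R2) • m := by
      intro j
      funext i
      rw [hwt, hx, ht]
      simp only [if_true, Bool.false_eq_true, if_false, Pi.add_apply, Pi.smul_apply,
        smul_eq_mul]
      have hq0 := (hqpos j).ne'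
      field_simp
      ring
    have key_snd : ∀ j, wt (j, true) • (z (j, true)).2 + wt (j, false) • (z (j, false)).2
        = (c j / R2) • (ρ⁻¹ • Matrix.vecMulVec m m - κ • 1)
          + (ρ⁻¹ * (c j / R2 * (q j ^ 2 - sj j ^ 2))) • Matrix.vecMulVec (w j) (w j) := by
      intro j
      rw [hz, hwt, hx, ht]
      simp only [if_true, Bool.false_eq_true, if_false]
      ext i k
      simp only [Matrix.add_apply, Matrix.sub_apply, Matrix.smul_apply,
        Matrix.vecMulVec_apply, Matrix.one_apply, Pi.add_apply, Pi.smul_apply, smul_eq_mul]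
      have hq0 := (hqpos j).ne'
      set aa := m i
      set bb := w j i
      set aa' := m k
      set bb' := w j k
      set qq := q j
      set ss := sj j
      set cc := c j
      by_cases hik : i = k
      · simp only [hik, if_true]
        field_simp
        ring
      · simp only [hik, if_false]
        field_simp
        ring
    have hcoef : ∀ j, ρ⁻¹ * (c j / R2 * (q j ^ 2 - sj j ^ 2)) = ρ⁻¹ * c j := by
      intro j
      rw [hq2 j]
      field_simp
      ring
    have hsum_eq : ∑ p : Fin n × Bool, wt p • z p = (m, U) := by
      rw [Fintype.sum_prod_type]
      have hsplit : ∀ j, ∑ b : Bool, wt (j, b) • z (j, b)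
          = ((c j / R2) • m,
             (c j / R2) • (ρ⁻¹ • Matrix.vecMulVec m m - κ • 1)
               + (ρ⁻¹ * c j) • Matrix.vecMulVec (w j) (w j)) := by
        intro j
        rw [Fintype.sum_bool]
        have h1 : wt (j, true) • z (j, true) + wt (j, false) • z (j, false)
            = (wt (j, true) • (z (j, true)).1 + wt (j, false) • (z (j, false)).1,
               wt (j, true) • (z (j, true)).2 + wt (j, false) • (z (j, false)).2) := rfl
        rw [h1]
        have h2 : (z (j, true)).1 = x (j, true) := rfl
        have h3 : (z (j, false)).1 = x (j, false) := rfl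
        rw [h2, h3, key_fst j, key_snd j, hcoef j]
      rw [Finset.sum_congr rfl fun j _ => hsplit j]
      have hdivsum : ∑ j, c j / R2 = 1 := by
        rw [← Finset.sum_div, hsumc, div_self hR2pos.ne']
      refine Prod.ext ?_ ?_
      · rw [Prod.fst_sum]
        simp only
        rw [← Finset.sum_smul, hdivsum, one_smul]
      · rw [Prod.snd_sum]
        simp only
        rw [Finset.sum_add_distrib, ← Finset.sum_smul, hdivsum, one_smul]
        have hterm : ∀ j, (ρ⁻¹ * c j) • Matrix.vecMulVec (w j) (w j)
            = ρ⁻¹ • Matrix.vecMulVec (g j) (g j) := by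
          intro j
          rw [mul_smul, hcw j]
        rw [Finset.sum_congr rfl fun j _ => hterm j, ← Finset.smul_sum, ← hg, hCdef,
          smul_smul, inv_mul_cancel₀ hρ.ne', one_smul, hA]
        abel
    have hmem := Finset.centerMass_mem_convexHull (s := Kset n ρ r) Finset.univ
      (fun p _ => hwt0 p) (by rw [hsum_wt]; norm_num) (fun p _ => hzK p)
    rw [Finset.centerMass_eq_of_sum_1 _ _ hsum_wt, hsum_eq] at hmem
    exact hmem

end ConvKAux

namespace ConvKAux

lemma convex_S {n : ℕ} (hn : 0 < n) {ρ r : ℝ} (hρ : 0 < ρ) :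
    Convex ℝ {z : (Fin n → ℝ) × Matrix (Fin n) (Fin n) ℝ | z.2.IsSymm ∧ z.2.trace = 0 ∧
      ∀ v : Fin n → ℝ, v ⬝ᵥ v = 1 →
        ρ⁻¹ * (z.1 ⬝ᵥ v) ^ 2 - v ⬝ᵥ z.2 *ᵥ v ≤ r ^ 2 / ((n : ℝ) * ρ)} := by
  rintro ⟨m1, U1⟩ ⟨h1s, h1t, h1e⟩ ⟨m2, U2⟩ ⟨h2s, h2t, h2e⟩ a b ha hb hab
  have hsnd : (a • (m1, U1) + b • (m2, U2)).2 = a • U1 + b • U2 := rfl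
  have hfst : (a • (m1, U1) + b • (m2, U2)).1 = a • m1 + b • m2 := rfl
  refine ⟨?_, ?_, ?_⟩
  · rw [hsnd]; exact (h1s.smul a).add (h2s.smul b)
  · rw [hsnd, Matrix.trace_add, Matrix.trace_smul, Matrix.trace_smul, h1t, h2t]; simp
  · rw [hsnd, hfst]
    intro v hv
    have hdot : (a • m1 + b • m2) ⬝ᵥ v = a * (m1 ⬝ᵥ v) + b * (m2 ⬝ᵥ v) := by
      rw [add_dotProduct, smul_dotProduct, smul_dotProduct]; rfl
    have hU : v ⬝ᵥ (a • U1 + b • U2) *ᵥ v = a * (v ⬝ᵥ U1 *ᵥ v) + b * (v ⬝ᵥ U2 *ᵥ v) := by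
      rw [Matrix.add_mulVec, dotProduct_add, Matrix.smul_mulVec,
        Matrix.smul_mulVec, dotProduct_smul, dotProduct_smul]; rfl
    rw [hdot, hU]
    have hsq : (a * (m1 ⬝ᵥ v) + b * (m2 ⬝ᵥ v)) ^ 2
        ≤ a * (m1 ⬝ᵥ v) ^ 2 + b * (m2 ⬝ᵥ v) ^ 2 := by
      nlinarith [mul_nonneg ha hb, sq_nonneg ((m1 ⬝ᵥ v) - (m2 ⬝ᵥ v))]
    have hρ' : (0:ℝ) ≤ ρ⁻¹ := by positivity
    have e1 := h1e v hv
    have e2 := h2e v hv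
    have t1 := mul_le_mul_of_nonneg_left e1 ha
    have t2 := mul_le_mul_of_nonneg_left e2 hb
    have t3 := mul_le_mul_of_nonneg_left hsq hρ'
    have h4 : a * (r ^ 2 / ((n : ℝ) * ρ)) + b * (r ^ 2 / ((n : ℝ) * ρ))
        = r ^ 2 / ((n : ℝ) * ρ) := by
      rw [← add_mul, hab, one_mul]
    simp only at t1 t2
    nlinarith [t1, t2, t3, h4]

lemma K_subset {n : ℕ} (hn : 2 ≤ n) {ρ r : ℝ} (hρ : 0 < ρ) (hr : 0 < r) :
    Kset n ρ r ⊆ {z : (Fin n → ℝ) × Matrix (Fin n) (Fin n) ℝ |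
      z.2.IsSymm ∧ z.2.trace = 0 ∧ ee n ρ z.1 z.2 ≤ r ^ 2 / (2 * ρ)} := by
  rintro ⟨m, U⟩ ⟨hm, hU⟩
  have hn0 : 0 < n := by omega
  have hnR : (0:ℝ) < n := by exact_mod_cast hn0
  dsimp only at hm hU ⊢
  subst hU
  refine ⟨?_, ?_, ?_⟩
  · exact ((vecMulVec_isSymm m).smul ρ⁻¹).sub (Matrix.isSymm_one.smul _)
  · rw [Matrix.trace_sub, Matrix.trace_smul, Matrix.trace_smul, Matrix.trace_one,
      trace_vecMulVec, hm]
    simp only [smul_eq_mul, Fintype.card_fin]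
    field_simp
    ring
  · unfold ee
    rw [sub_sub_cancel, hm, lamMax_smul_one hn0]
    apply le_of_eq
    field_simp

end ConvKAux

open ConvKAux in
/-- the convex hull of K_{ρ,r} equals {(m,U) ∈ ℝⁿ×S₀ⁿˣⁿ : e(ρ,m,U) ≤ r²/(2ρ)}. -/
theorem convexHull_Kset (n : ℕ) (hn : 2 ≤ n) (ρ r : ℝ) (hρ : 0 < ρ) (hr : 0 < r) :
    convexHull ℝ (Kset n ρ r) =
      {z : (Fin n → ℝ) × Matrix (Fin n) (Fin n) ℝ |
        z.2.IsSymm ∧ z.2.trace = 0 ∧ ee n ρ z.1 z.2 ≤ r ^ 2 / (2 * ρ)} := by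
  have hn0 : 0 < n := by omega
  have hSeq : {z : (Fin n → ℝ) × Matrix (Fin n) (Fin n) ℝ |
        z.2.IsSymm ∧ z.2.trace = 0 ∧ ee n ρ z.1 z.2 ≤ r ^ 2 / (2 * ρ)}
      = {z : (Fin n → ℝ) × Matrix (Fin n) (Fin n) ℝ | z.2.IsSymm ∧ z.2.trace = 0 ∧
          ∀ v : Fin n → ℝ, v ⬝ᵥ v = 1 →
            ρ⁻¹ * (z.1 ⬝ᵥ v) ^ 2 - v ⬝ᵥ z.2 *ᵥ v ≤ r ^ 2 / ((n : ℝ) * ρ)} := by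
    ext z
    exact and_congr_right fun _ => and_congr_right fun _ => ee_le_iff hn0 hρ z.1 z.2
  apply Set.Subset.antisymm
  · apply convexHull_min (K_subset hn hρ hr)
    rw [hSeq]
    exact convex_S hn0 hρ
  · intro z hz
    rw [hSeq] at hz
    obtain ⟨h1, h2, h3⟩ := hz
    have := hard_dir hn hρ hr z.1 z.2 h1 h2 h3
    simpa using this
end

section
/- For fixed ρ > 0, if (m,U) ∈ ℝⁿ×S₀ⁿˣⁿ, then r = √(2ρ·e(ρ,m,U)) is the smallest r ≥ 0 such that (m,U) lies in the convex hull of K_{ρ,r}. -/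
open Matrix

namespace SA

variable {n : ℕ}

lemma unit_exists (hn : 0 < n) :
    ∃ v : Fin n → ℝ, v ⬝ᵥ v = 1 := by
  refine ⟨Pi.single ⟨0, hn⟩ 1, ?_⟩
  simp [dotProduct, Pi.single_apply]

lemma abs_le_one_of_unit {v : Fin n → ℝ} (hv : v ⬝ᵥ v = 1) (i : Fin n) : |v i| ≤ 1 := by
  have h1 : v i * v i ≤ 1 := by
    rw [← hv]
    exact Finset.single_le_sum (f := fun j => v j * v j)
      (fun j _ => mul_self_nonneg _) (Finset.mem_univ i)
  nlinarith [abs_nonneg (v i), abs_mul_abs_self (v i)]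

lemma rs_bddAbove (A : Matrix (Fin n) (Fin n) ℝ) :
    BddAbove {r : ℝ | ∃ v : Fin n → ℝ, v ⬝ᵥ v = 1 ∧ r = v ⬝ᵥ A.mulVec v} := by
  refine ⟨∑ i, ∑ j, |A i j|, ?_⟩
  rintro r ⟨v, hv, rfl⟩
  have : v ⬝ᵥ A.mulVec v = ∑ i, ∑ j, v i * (A i j * v j) := by
    simp [dotProduct, mulVec, Finset.mul_sum]
  rw [this]
  refine Finset.sum_le_sum fun i _ => Finset.sum_le_sum fun j _ => ?_
  have hi := abs_le_one_of_unit hv i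
  have hj := abs_le_one_of_unit hv j
  calc v i * (A i j * v j) ≤ |v i * (A i j * v j)| := le_abs_self _
    _ = |v i| * |A i j| * |v j| := by rw [abs_mul, abs_mul]; ring
    _ ≤ 1 * |A i j| * 1 := by
        apply mul_le_mul (mul_le_mul hi le_rfl (abs_nonneg _) zero_le_one) hj (abs_nonneg _)
        positivity
    _ = |A i j| := by ring

lemma rayleigh_le_lamMax (A : Matrix (Fin n) (Fin n) ℝ) {v : Fin n → ℝ}
    (hv : v ⬝ᵥ v = 1) : v ⬝ᵥ A.mulVec v ≤ lamMax A :=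
  le_csSup (rs_bddAbove A) ⟨v, hv, rfl⟩

lemma lamMax_le (hn : 0 < n) {A : Matrix (Fin n) (Fin n) ℝ} {c : ℝ}
    (h : ∀ v : Fin n → ℝ, v ⬝ᵥ v = 1 → v ⬝ᵥ A.mulVec v ≤ c) : lamMax A ≤ c := by
  obtain ⟨v, hv⟩ := unit_exists (n := n) hn
  exact csSup_le ⟨_, ⟨v, hv, rfl⟩⟩ (by rintro r ⟨u, hu, rfl⟩; exact h u hu)

lemma vecMulVec_mulVec' (m v : Fin n → ℝ) : (vecMulVec m m) *ᵥ v = (m ⬝ᵥ v) • m := by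
  funext i
  simp only [mulVec, dotProduct, vecMulVec_apply, Pi.smul_apply, smul_eq_mul, Finset.sum_mul]
  exact Finset.sum_congr rfl fun j _ => by ring

lemma rq_eval (ρ : ℝ) (m : Fin n → ℝ) (U : Matrix (Fin n) (Fin n) ℝ) (v : Fin n → ℝ) :
    v ⬝ᵥ (ρ⁻¹ • vecMulVec m m - U).mulVec v
      = ρ⁻¹ * (m ⬝ᵥ v) ^ 2 - v ⬝ᵥ U.mulVec v := by
  rw [sub_mulVec, dotProduct_sub, smul_mulVec, dotProduct_smul, vecMulVec_mulVec',
    dotProduct_smul, smul_eq_mul, smul_eq_mul, dotProduct_comm v m]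
  ring

lemma diag_le_lamMax (A : Matrix (Fin n) (Fin n) ℝ) (i : Fin n) : A i i ≤ lamMax A := by
  have hv : (Pi.single i 1 : Fin n → ℝ) ⬝ᵥ Pi.single i 1 = 1 := by
    simp [dotProduct, Pi.single_apply]
  have := rayleigh_le_lamMax A hv
  rwa [show (Pi.single i 1 : Fin n → ℝ) ⬝ᵥ A.mulVec (Pi.single i 1) = A i i by
    simp [dotProduct, mulVec, Pi.single_apply, Finset.mul_sum]] at this


lemma rq_kpoint (ρ c : ℝ) (mi v : Fin n → ℝ) :
    v ⬝ᵥ ((ρ⁻¹ • vecMulVec mi mi - c • 1).mulVec v)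
      = ρ⁻¹ * (mi ⬝ᵥ v) ^ 2 - c * (v ⬝ᵥ v) := by
  rw [sub_mulVec, dotProduct_sub, smul_mulVec, dotProduct_smul, vecMulVec_mulVec',
    dotProduct_smul, smul_mulVec, one_mulVec, dotProduct_smul, smul_eq_mul, smul_eq_mul,
    smul_eq_mul, dotProduct_comm v mi]
  ring

lemma jensen_sq {ι : Type} (t : Finset ι) (w a : ι → ℝ) (hw0 : ∀ i ∈ t, 0 ≤ w i)
    (hw1 : ∑ i ∈ t, w i = 1) : (∑ i ∈ t, w i * a i) ^ 2 ≤ ∑ i ∈ t, w i * a i ^ 2 := by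
  have h := Finset.sum_mul_sq_le_sq_mul_sq t (fun i => Real.sqrt (w i))
    (fun i => Real.sqrt (w i) * a i)
  have e1 : ∀ i ∈ t, Real.sqrt (w i) * (Real.sqrt (w i) * a i) = w i * a i := fun i hi => by
    rw [← mul_assoc, Real.mul_self_sqrt (hw0 i hi)]
  have e2 : ∀ i ∈ t, Real.sqrt (w i) ^ 2 = w i := fun i hi => Real.sq_sqrt (hw0 i hi)
  have e3 : ∀ i ∈ t, (Real.sqrt (w i) * a i) ^ 2 = w i * a i ^ 2 := fun i hi => by
    rw [mul_pow, Real.sq_sqrt (hw0 i hi)]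
  rw [Finset.sum_congr rfl e1, Finset.sum_congr rfl e2, Finset.sum_congr rfl e3, hw1, one_mul] at h
  exact h

lemma sum_fst_dot {ι : Type} (t : Finset ι) (w : ι → ℝ)
    (f : ι → (Fin n → ℝ)) (v : Fin n → ℝ) :
    (∑ i ∈ t, w i • f i) ⬝ᵥ v = ∑ i ∈ t, w i * (f i ⬝ᵥ v) := by
  simp only [dotProduct, Finset.sum_apply, Pi.smul_apply, smul_eq_mul, Finset.sum_mul,
    Finset.mul_sum]
  rw [Finset.sum_comm]
  exact Finset.sum_congr rfl fun i _ => Finset.sum_congr rfl fun j _ => by ring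

lemma sum_snd_rq {ι : Type} (t : Finset ι) (w : ι → ℝ)
    (M : ι → Matrix (Fin n) (Fin n) ℝ) (v : Fin n → ℝ) :
    v ⬝ᵥ (∑ i ∈ t, w i • M i).mulVec v = ∑ i ∈ t, w i * (v ⬝ᵥ (M i).mulVec v) := by
  classical
  induction t using Finset.induction with
  | empty => simp [mulVec]
  | insert _ _ h ih =>
      rw [Finset.sum_insert h, Finset.sum_insert h, add_mulVec, dotProduct_add,
        smul_mulVec, dotProduct_smul, ih, smul_eq_mul]

lemma lamMax_le_of_mem (hn : 0 < n) {ρ r : ℝ} (hρ : 0 < ρ)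
    {m : Fin n → ℝ} {U : Matrix (Fin n) (Fin n) ℝ}
    (hmem : (m, U) ∈ convexHull ℝ (Kset n ρ r)) :
    lamMax (ρ⁻¹ • vecMulVec m m - U) ≤ r ^ 2 / ((n : ℝ) * ρ) := by
  rw [convexHull_eq] at hmem
  obtain ⟨ι, t, w, z, hw0, hw1, hz, hcm⟩ := hmem
  rw [Finset.centerMass_eq_of_sum_1 _ _ hw1] at hcm
  have hm : m = ∑ i ∈ t, w i • (z i).1 := by
    have := congrArg Prod.fst hcm
    simp only [Prod.fst_sum, Prod.smul_fst] at this
    exact this.symm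
  have hU : U = ∑ i ∈ t, w i • (z i).2 := by
    have := congrArg Prod.snd hcm
    simp only [Prod.snd_sum, Prod.smul_snd] at this
    exact this.symm
  set c : ℝ := r ^ 2 / ((n : ℝ) * ρ) with hc
  refine lamMax_le hn fun v hv => ?_
  rw [rq_eval]
  set a : ι → ℝ := fun i => (z i).1 ⬝ᵥ v with ha
  have hmv : m ⬝ᵥ v = ∑ i ∈ t, w i * a i := by rw [hm, sum_fst_dot]
  have hUv : v ⬝ᵥ U.mulVec v = ∑ i ∈ t, w i * (ρ⁻¹ * a i ^ 2 - c) := by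
    rw [hU, sum_snd_rq]
    refine Finset.sum_congr rfl fun i hi => ?_
    obtain ⟨h1, h2⟩ := hz i hi
    rw [h2, h1]
    rw [show r ^ 2 / ((n:ℝ) * ρ) = c from rfl, rq_kpoint, hv, mul_one]
  have hJ := jensen_sq t w a hw0 hw1
  have hsplit : ∑ i ∈ t, w i * (ρ⁻¹ * a i ^ 2 - c) =
      ρ⁻¹ * (∑ i ∈ t, w i * a i ^ 2) - c := by
    have hc2 : ∀ i ∈ t, w i * (ρ⁻¹ * a i ^ 2 - c) = ρ⁻¹ * (w i * a i ^ 2) - c * w i :=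
      fun i _ => by ring
    rw [Finset.sum_congr rfl hc2, Finset.sum_sub_distrib, ← Finset.mul_sum, ← Finset.mul_sum,
      hw1, mul_one]
  rw [hmv, hUv, hsplit]
  have hρi : (0:ℝ) ≤ ρ⁻¹ := le_of_lt (inv_pos.2 hρ)
  nlinarith [mul_le_mul_of_nonneg_left hJ hρi]


lemma dot_self_nonneg (x : Fin n → ℝ) : 0 ≤ x ⬝ᵥ x :=
  Finset.sum_nonneg fun i _ => mul_self_nonneg _

lemma eq_zero_of_dot_self_eq_zero {x : Fin n → ℝ} (h : x ⬝ᵥ x = 0) : x = 0 := by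
  funext i
  have := (Finset.sum_eq_zero_iff_of_nonneg
    (fun j (_ : j ∈ Finset.univ) => mul_self_nonneg (x j))).1 h i (Finset.mem_univ i)
  have := mul_self_eq_zero.1 this
  simpa using this

open scoped MatrixOrder in
lemma mem_convexHull_of_psd (hn : 0 < n) {ρ r : ℝ} (hρ : 0 < ρ)
    {m : Fin n → ℝ} {U : Matrix (Fin n) (Fin n) ℝ} (htr : U.trace = 0)
    (hC : (ρ • U + (r ^ 2 / (n : ℝ)) • (1 : Matrix (Fin n) (Fin n) ℝ)
            - vecMulVec m m).PosSemidef) :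
    (m, U) ∈ convexHull ℝ (Kset n ρ r) := by
  classical
  set C : Matrix (Fin n) (Fin n) ℝ :=
    ρ • U + (r ^ 2 / (n : ℝ)) • (1 : Matrix (Fin n) (Fin n) ℝ) - vecMulVec m m with hCdef
  have hnR : ((n : ℝ)) ≠ 0 := Nat.cast_ne_zero.2 hn.ne'
  have hρ' : ρ ≠ 0 := hρ.ne'
  -- entries of C
  have hCent : ∀ i k, C i k = ρ * U i k + r ^ 2 / n * (if i = k then 1 else 0) - m i * m k := by
    intro i k
    simp [hCdef, Matrix.add_apply, Matrix.sub_apply, Matrix.smul_apply, Matrix.one_apply,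
      vecMulVec_apply, smul_eq_mul]
  -- square root decomposition
  set S := CFC.sqrt C with hSdef
  have hSS : S * S = C := CFC.sqrt_mul_sqrt_self C hC.nonneg
  have hSsym : ∀ i k, S k i = S i k := fun i k => by
    have := (CFC.sqrt_nonneg C).posSemidef.1.apply i k
    simpa using this
  set g : Fin n → (Fin n → ℝ) := fun j i => S i j with hgdef
  set μ : Fin n → ℝ := fun j => g j ⬝ᵥ g j with hμdef
  have hμ0 : ∀ j, 0 ≤ μ j := fun j => dot_self_nonneg _
  have hCg : ∀ i k, C i k = ∑ j, g j i * g j k := by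
    intro i k
    rw [← hSS, Matrix.mul_apply]
    exact Finset.sum_congr rfl fun j _ => by rw [show S j k = S k j from hSsym k j]
  set s : ℝ := r ^ 2 - m ⬝ᵥ m with hsdef
  have htrC : ∑ j, μ j = s := by
    have h1 : ∑ j, μ j = ∑ i, C i i := by
      simp only [hμdef, dotProduct]
      rw [Finset.sum_comm]
      exact Finset.sum_congr rfl fun i _ => (hCg i i).symm
    rw [h1]
    have : ∑ i, C i i = C.trace := rfl
    rw [this, hCdef, trace_sub, trace_add, trace_smul, trace_smul, htr, trace_one]
    have htrv : (vecMulVec m m).trace = m ⬝ᵥ m := by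
      simp [Matrix.trace, Matrix.diag, vecMulVec_apply, dotProduct]
    rw [htrv, hsdef]
    simp [smul_eq_mul]
    field_simp
  have hs0 : 0 ≤ s := htrC ▸ Finset.sum_nonneg fun j _ => hμ0 j
  rcases eq_or_lt_of_le hs0 with hs | hs
  · -- s = 0 : the point is itself in Kset
    have hμz : ∀ j, μ j = 0 := by
      intro j
      have := (Finset.sum_eq_zero_iff_of_nonneg (fun j _ => hμ0 j)).1 (htrC.trans hs.symm) j
        (Finset.mem_univ j)
      exact this
    have hgz : ∀ j, g j = 0 := fun j => eq_zero_of_dot_self_eq_zero (hμz j)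
    have hC0 : ∀ i k, C i k = 0 := by
      intro i k; rw [hCg]
      exact Finset.sum_eq_zero fun j _ => by rw [hgz j]; simp
    have hmm : m ⬝ᵥ m = r ^ 2 := by
      have : s = 0 := hs.symm
      rw [hsdef] at this; linarith
    refine subset_convexHull ℝ _ ⟨hmm, ?_⟩
    ext i k
    have h0 := hC0 i k
    rw [hCent] at h0
    simp only [Matrix.sub_apply, Matrix.smul_apply, Matrix.one_apply, vecMulVec_apply,
      smul_eq_mul, hmm]
    by_cases hik : i = k
    · simp only [hik, if_true] at h0 ⊢
      field_simp at h0 ⊢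
      linear_combination h0
    · simp only [hik, if_false] at h0 ⊢
      field_simp at h0 ⊢
      linear_combination h0
  · -- s > 0 : genuine convex combination
    have hsne : s ≠ 0 := hs.ne'
    set v : Fin n → (Fin n → ℝ) := fun j =>
      if μ j = 0 then Pi.single ⟨0, hn⟩ 1 else (Real.sqrt (μ j))⁻¹ • g j with hvdef
    have hvunit : ∀ j, v j ⬝ᵥ v j = 1 := by
      intro j
      by_cases h : μ j = 0
      · simp [hvdef, h, dotProduct, Pi.single_apply]
      · have hμpos : 0 < μ j := lt_of_le_of_ne (hμ0 j) (Ne.symm h)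
        have hsq : Real.sqrt (μ j) * Real.sqrt (μ j) = μ j := Real.mul_self_sqrt hμpos.le
        have hsqne : Real.sqrt (μ j) ≠ 0 := by positivity
        simp only [hvdef, if_neg h, smul_dotProduct, dotProduct_smul, smul_eq_mul]
        rw [show g j ⬝ᵥ g j = μ j from rfl]
        field_simp
        rw [Real.sq_sqrt hμpos.le]
    have hgv : ∀ j (i k : Fin n), g j i * g j k = μ j * (v j i * v j k) := by
      intro j i k
      by_cases h : μ j = 0
      · have := eq_zero_of_dot_self_eq_zero (x := g j) h
        rw [this, h]; simp
      · have hμpos : 0 < μ j := lt_of_le_of_ne (hμ0 j) (Ne.symm h)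
        have hsq : Real.sqrt (μ j) * Real.sqrt (μ j) = μ j := Real.mul_self_sqrt hμpos.le
        have hsqne : Real.sqrt (μ j) ≠ 0 := by positivity
        simp only [hvdef, if_neg h, Pi.smul_apply, smul_eq_mul]
        field_simp
        rw [Real.sq_sqrt hμpos.le]
    set b : Fin n → ℝ := fun j => m ⬝ᵥ v j with hbdef
    set d : Fin n → ℝ := fun j => Real.sqrt (b j ^ 2 + s) with hddef
    have hd2 : ∀ j, d j ^ 2 = b j ^ 2 + s := fun j => Real.sq_sqrt (by positivity)
    have hdpos : ∀ j, 0 < d j := fun j => Real.sqrt_pos.2 (by positivity)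
    have hbd : ∀ j, |b j| ≤ d j := by
      intro j
      have h1 : |b j| = Real.sqrt (b j ^ 2) := (Real.sqrt_sq_eq_abs _).symm
      rw [h1, hddef]
      exact Real.sqrt_le_sqrt (by linarith)
    set tt : Fin n → Bool → ℝ := fun j σ => if σ then d j - b j else -(d j + b j) with htdef
    set q : Fin n → Bool → ℝ :=
      fun j σ => if σ then (d j + b j) / (2 * d j) else (d j - b j) / (2 * d j) with hqdef
    have hq0 : ∀ j σ, 0 ≤ q j σ := by
      intro j σ
      have h1 := abs_le.1 (hbd j)
      have h2 := hdpos j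
      cases σ <;> simp only [hqdef, if_true, if_false, Bool.false_eq_true] <;>
        apply div_nonneg <;> linarith
    have hq1 : ∀ j, q j true + q j false = 1 := by
      intro j
      have h2 := (hdpos j).ne'
      simp only [hqdef, if_true, if_false, Bool.false_eq_true]
      field_simp
      ring
    have hq2 : ∀ j, q j true * tt j true + q j false * tt j false = 0 := by
      intro j
      have h2 := (hdpos j).ne'
      simp only [hqdef, htdef, if_true, if_false, Bool.false_eq_true]
      field_simp
      ring
    have hq3 : ∀ j, q j true * tt j true ^ 2 + q j false * tt j false ^ 2 = s := by
      intro j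
      have h2 := (hdpos j).ne'
      simp only [hqdef, htdef, if_true, if_false, Bool.false_eq_true]
      field_simp
      linear_combination (2 * d j) * hd2 j
    have hq4 : ∀ j σ, tt j σ ^ 2 + 2 * b j * tt j σ = s := by
      intro j σ
      cases σ <;> simp only [htdef, if_true, if_false, Bool.false_eq_true] <;>
        linear_combination hd2 j
    set x : Fin n → Bool → (Fin n → ℝ) := fun j σ => m + tt j σ • v j with hxdef
    have hx2 : ∀ j σ, x j σ ⬝ᵥ x j σ = r ^ 2 := by
      intro j σ
      simp only [hxdef, dotProduct_add, add_dotProduct, dotProduct_smul, smul_dotProduct,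
        smul_eq_mul]
      rw [hvunit j, dotProduct_comm (v j) m]
      have h4 := hq4 j σ
      have hbj : m ⬝ᵥ v j = b j := rfl
      rw [hbj]
      linear_combination h4 + hsdef
    set w : Fin n × Bool → ℝ := fun p => μ p.1 / s * q p.1 p.2 with hwdef
    have hw0 : ∀ p : Fin n × Bool, 0 ≤ w p := fun p =>
      mul_nonneg (div_nonneg (hμ0 _) hs0) (hq0 _ _)
    have hwsum : ∑ p : Fin n × Bool, w p = 1 := by
      rw [Fintype.sum_prod_type]
      have hj : ∀ j, ∑ σ : Bool, w (j, σ) = μ j / s := by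
        intro j
        rw [Fintype.sum_bool]
        simp only [hwdef]
        linear_combination (μ j / s) * hq1 j
      rw [Finset.sum_congr rfl (fun j _ => hj j), ← Finset.sum_div, htrC, div_self hsne]
    set z : Fin n × Bool → (Fin n → ℝ) × Matrix (Fin n) (Fin n) ℝ := fun p =>
      (x p.1 p.2, ρ⁻¹ • vecMulVec (x p.1 p.2) (x p.1 p.2)
        - (r ^ 2 / ((n : ℝ) * ρ)) • (1 : Matrix (Fin n) (Fin n) ℝ)) with hzdef
    have hzK : ∀ p : Fin n × Bool, z p ∈ Kset n ρ r := by
      intro p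
      refine ⟨hx2 p.1 p.2, ?_⟩
      show (z p).2 = _
      rw [show (z p).1 ⬝ᵥ (z p).1 = r ^ 2 from hx2 p.1 p.2]
    have hmain := Finset.centerMass_mem_convexHull Finset.univ (fun p _ => hw0 p)
      (by rw [hwsum]; exact one_pos) (fun (p : Fin n × Bool) _ => hzK p)
    rw [Finset.centerMass_eq_of_sum_1 _ _ hwsum] at hmain
    have hrep : ∑ p : Fin n × Bool, w p • z p = (m, U) := by
      have h1 : (∑ p : Fin n × Bool, w p • z p).1 = m := by
        rw [Prod.fst_sum]
        funext i
        rw [Finset.sum_apply]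
        have hterm : ∀ p : Fin n × Bool, (w p • z p).1 i = w p * (m i + tt p.1 p.2 * v p.1 i) := by
          intro p
          simp only [hzdef, Prod.smul_fst, Pi.smul_apply, hxdef, Pi.add_apply, smul_eq_mul]
        rw [Finset.sum_congr rfl fun p _ => hterm p, Fintype.sum_prod_type]
        have hj : ∀ j, ∑ σ : Bool, w (j, σ) * (m i + tt j σ * v j i) = μ j / s * m i := by
          intro j
          rw [Fintype.sum_bool]
          simp only [hwdef]
          linear_combination (μ j / s * m i) * hq1 j + (μ j / s * v j i) * hq2 j
        rw [Finset.sum_congr rfl fun j _ => hj j, ← Finset.sum_mul, ← Finset.sum_div, htrC,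
          div_self hsne, one_mul]
      have h2 : (∑ p : Fin n × Bool, w p • z p).2 = U := by
        rw [Prod.snd_sum]
        ext i k
        rw [Matrix.sum_apply]
        have hterm : ∀ p : Fin n × Bool, (w p • z p).2 i k
            = ρ⁻¹ * (w p * ((m i + tt p.1 p.2 * v p.1 i) * (m k + tt p.1 p.2 * v p.1 k)))
              - (r ^ 2 / ((n : ℝ) * ρ) * (if i = k then (1:ℝ) else 0)) * w p := by
          intro p
          simp only [hzdef, Prod.smul_snd, Matrix.smul_apply, Matrix.sub_apply,
            vecMulVec_apply, Matrix.one_apply, hxdef, Pi.add_apply, Pi.smul_apply, smul_eq_mul]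
          ring
        rw [Finset.sum_congr rfl fun p _ => hterm p, Finset.sum_sub_distrib, ← Finset.mul_sum,
          ← Finset.mul_sum, hwsum, mul_one]
        have hsum1 : ∑ p : Fin n × Bool,
            w p * ((m i + tt p.1 p.2 * v p.1 i) * (m k + tt p.1 p.2 * v p.1 k))
            = m i * m k + C i k := by
          rw [Fintype.sum_prod_type]
          have hj : ∀ j, ∑ σ : Bool,
              w (j, σ) * ((m i + tt j σ * v j i) * (m k + tt j σ * v j k))
              = μ j / s * (m i * m k) + μ j * (v j i * v j k) := by
            intro j
            rw [Fintype.sum_bool]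
            simp only [hwdef]
            have hss : μ j / s * s = μ j := div_mul_cancel₀ (μ j) hsne
            linear_combination (μ j / s * (m i * m k)) * hq1 j
              + (μ j / s * (m i * v j k + v j i * m k)) * hq2 j
              + (μ j / s * (v j i * v j k)) * hq3 j + (v j i * v j k) * hss
          rw [Finset.sum_congr rfl fun j _ => hj j, Finset.sum_add_distrib]
          congr 1
          · rw [← Finset.sum_mul, ← Finset.sum_div, htrC, div_self hsne, one_mul]
          · rw [hCg i k]
            exact Finset.sum_congr rfl fun j _ => (hgv j i k).symm
        rw [hsum1]
        have hce := hCent i k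
        by_cases hik : i = k
        · simp only [hik, if_true] at hce ⊢
          field_simp at hce ⊢
          linear_combination hce
        · simp only [hik, if_false] at hce ⊢
          field_simp at hce ⊢
          linear_combination hce
      exact Prod.ext h1 h2
    rw [← hrep]
    exact hmain


end SA

/-- r = √(2ρ·e(ρ,m,U)) is the smallest r ≥ 0 with (m,U) ∈ K_{ρ,r}^co. -/
theorem sqrt_isLeast (n : ℕ) (hn : 2 ≤ n) (ρ : ℝ) (hρ : 0 < ρ)
    (m : Fin n → ℝ) (U : Matrix (Fin n) (Fin n) ℝ)
    (hsym : U.IsSymm) (htr : U.trace = 0) :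
    IsLeast {r : ℝ | 0 ≤ r ∧ (m, U) ∈ convexHull ℝ (Kset n ρ r)}
      (Real.sqrt (2 * ρ * ee n ρ m U)) := by
  have hn0 : 0 < n := lt_of_lt_of_le two_pos hn
  have hnR : ((n : ℝ)) ≠ 0 := Nat.cast_ne_zero.2 hn0.ne'
  have hnRpos : (0 : ℝ) < n := Nat.cast_pos.2 hn0
  set A : Matrix (Fin n) (Fin n) ℝ := ρ⁻¹ • vecMulVec m m - U with hA
  set c : ℝ := lamMax A with hc
  have htrA : ∑ i, A i i = ρ⁻¹ * (m ⬝ᵥ m) := by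
    have he : ∀ i, A i i = ρ⁻¹ * (m i * m i) - U i i := by
      intro i
      simp [hA, Matrix.sub_apply, Matrix.smul_apply, vecMulVec_apply, smul_eq_mul]
    rw [Finset.sum_congr rfl fun i _ => he i, Finset.sum_sub_distrib, ← Finset.mul_sum,
      show (∑ i, U i i) = U.trace from rfl, htr, sub_zero]
    rfl
  have hcn : ρ⁻¹ * (m ⬝ᵥ m) ≤ (n : ℝ) * c := by
    rw [← htrA]
    calc ∑ i, A i i ≤ ∑ _i : Fin n, c :=
          Finset.sum_le_sum fun i _ => SA.diag_le_lamMax A i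
      _ = (n : ℝ) * c := by
          rw [Finset.sum_const, Finset.card_univ, Fintype.card_fin, nsmul_eq_mul]
  have hc0 : 0 ≤ c := by
    have hmm := SA.dot_self_nonneg m
    have h1 : 0 ≤ ρ⁻¹ * (m ⬝ᵥ m) := by positivity
    nlinarith
  have heq : 2 * ρ * ee n ρ m U = (n : ℝ) * ρ * c := by
    rw [ee, ← hA, ← hc]; ring
  set r0 : ℝ := Real.sqrt (2 * ρ * ee n ρ m U) with hr0
  have hr0sq : r0 ^ 2 = (n : ℝ) * ρ * c := by
    rw [hr0, Real.sq_sqrt (by rw [heq]; positivity)]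
    exact heq
  constructor
  · refine ⟨Real.sqrt_nonneg _, ?_⟩
    apply SA.mem_convexHull_of_psd hn0 hρ htr
    have hcoef : r0 ^ 2 / (n : ℝ) = ρ * c := by
      rw [hr0sq]; field_simp
    refine Matrix.PosSemidef.of_dotProduct_mulVec_nonneg ?_ ?_
    · -- Hermitian
      show _ᴴ = _
      ext i k
      simp only [conjTranspose_apply, Matrix.add_apply, Matrix.sub_apply, Matrix.smul_apply,
        Matrix.one_apply, vecMulVec_apply, smul_eq_mul, star_trivial]
      rw [hsym.apply i k]
      by_cases hik : i = k
      · subst hik; ring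
      · rw [if_neg hik, if_neg fun h => hik h.symm]; ring
    · intro xv
      have hstar : star xv = xv := by funext i; simp
      rw [hstar]
      have hAx : xv ⬝ᵥ A *ᵥ xv ≤ c * (xv ⬝ᵥ xv) := by
        rcases eq_or_lt_of_le (SA.dot_self_nonneg xv) with h0 | hpos
        · have hx0 : xv = 0 := SA.eq_zero_of_dot_self_eq_zero h0.symm
          rw [hx0]
          simp
        · set ν : ℝ := Real.sqrt (xv ⬝ᵥ xv) with hν
          have hν2 : ν ^ 2 = xv ⬝ᵥ xv := Real.sq_sqrt hpos.le
          have hνpos : 0 < ν := Real.sqrt_pos.2 hpos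
          have hu : (ν⁻¹ • xv) ⬝ᵥ (ν⁻¹ • xv) = 1 := by
            rw [smul_dotProduct, dotProduct_smul, smul_eq_mul, smul_eq_mul]
            field_simp
            linarith [hν2]
          have hR := SA.rayleigh_le_lamMax A hu
          rw [smul_dotProduct, mulVec_smul, dotProduct_smul, smul_eq_mul, smul_eq_mul] at hR
          have hfin : xv ⬝ᵥ A *ᵥ xv ≤ (ν * ν) * c := by
            have hmul := mul_le_mul_of_nonneg_left hR (by positivity : (0:ℝ) ≤ ν * ν)
            have hid : ν * ν * (ν⁻¹ * (ν⁻¹ * (xv ⬝ᵥ A *ᵥ xv))) = xv ⬝ᵥ A *ᵥ xv := by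
              field_simp
            rw [hid] at hmul
            linarith [hmul]
          have : ν * ν = xv ⬝ᵥ xv := by nlinarith [hν2]
          rw [this] at hfin
          linarith [hfin]
      have hAx' : xv ⬝ᵥ A *ᵥ xv = ρ⁻¹ * (m ⬝ᵥ xv) ^ 2 - xv ⬝ᵥ U *ᵥ xv := by
        rw [hA]; exact SA.rq_eval ρ m U xv
      have hCx : xv ⬝ᵥ ((ρ • U + (r0 ^ 2 / (n : ℝ)) • (1 : Matrix (Fin n) (Fin n) ℝ)
            - vecMulVec m m) *ᵥ xv)
          = ρ * (xv ⬝ᵥ U *ᵥ xv) + (r0 ^ 2 / (n : ℝ)) * (xv ⬝ᵥ xv) - (m ⬝ᵥ xv) ^ 2 := by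
        rw [sub_mulVec, add_mulVec, smul_mulVec, smul_mulVec, one_mulVec,
          dotProduct_sub, dotProduct_add, dotProduct_smul, dotProduct_smul,
          SA.vecMulVec_mulVec', dotProduct_smul, smul_eq_mul, smul_eq_mul, smul_eq_mul,
          dotProduct_comm xv m]
        ring
      rw [hCx, hcoef]
      have h6 : ρ * (xv ⬝ᵥ A *ᵥ xv) = (m ⬝ᵥ xv) ^ 2 - ρ * (xv ⬝ᵥ U *ᵥ xv) := by
        rw [hAx']
        field_simp
      have h5 : ρ * (xv ⬝ᵥ A *ᵥ xv) ≤ ρ * (c * (xv ⬝ᵥ xv)) :=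
        mul_le_mul_of_nonneg_left hAx hρ.le
      nlinarith [h5, h6]
  · rintro r ⟨hrnn, hmem⟩
    have hle := SA.lamMax_le_of_mem hn0 hρ hmem
    rw [← hA, ← hc] at hle
    have h2 : 2 * ρ * ee n ρ m U ≤ r ^ 2 := by
      rw [heq]
      calc (n : ℝ) * ρ * c ≤ (n : ℝ) * ρ * (r ^ 2 / ((n : ℝ) * ρ)) := by
            apply mul_le_mul_of_nonneg_left hle (by positivity)
        _ = r ^ 2 := by field_simp
    calc r0 ≤ Real.sqrt (r ^ 2) := Real.sqrt_le_sqrt h2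
      _ = r := Real.sqrt_sq hrnn
end

section
/- Let n ≥ 3, ρ̄ > 0, q̄ > 0, and let K_{ρ̄,q̄} = {(m,U) ∈ ℝⁿ×S₀ⁿˣⁿ : m⊗m/ρ̄ − U = q̄·I_n}. Then for any two distinct elements w', w'' ∈ K_{ρ̄,q̄}, the difference w' − w'' lies in the wave cone Λ, i.e., there exists ξ ∈ ℝⁿ\{0} with ξ·(m'−m'') = 0 and (U'−U'')ξ = 0. -/
open Matrix

/-- for n ≥ 3, the difference of two distinct elements of
K_{ρ̄,q̄} = {(m,U) ∈ ℝⁿ×S₀ⁿˣⁿ : m⊗m/ρ̄ − U = q̄·Iₙ} lies in the wave cone Λ. -/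
theorem diff_mem_wave_cone (n : ℕ) (hn : 3 ≤ n) (ρ q : ℝ) (hρ : 0 < ρ) (hq : 0 < q)
    (m' m'' : Fin n → ℝ) (U' U'' : Matrix (Fin n) (Fin n) ℝ)
    (hsym' : U'.IsSymm) (htr' : U'.trace = 0)
    (hsym'' : U''.IsSymm) (htr'' : U''.trace = 0)
    (hK' : ρ⁻¹ • Matrix.vecMulVec m' m' - U' = q • (1 : Matrix (Fin n) (Fin n) ℝ))
    (hK'' : ρ⁻¹ • Matrix.vecMulVec m'' m'' - U'' = q • (1 : Matrix (Fin n) (Fin n) ℝ))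
    (hne : (m', U') ≠ (m'', U'')) :
    ∃ ξ : Fin n → ℝ, ξ ≠ 0 ∧ ξ ⬝ᵥ (m' - m'') = 0 ∧ (U' - U'').mulVec ξ = 0 := by
  -- the 2×n matrix with rows m', m''
  set A : Matrix (Fin 2) (Fin n) ℝ := Matrix.of ![m', m''] with hA
  have hnotinj : ¬ Function.Injective A.mulVecLin := by
    intro hinj
    have h := LinearMap.finrank_le_finrank_of_injective hinj
    simp [Module.finrank_pi] at h
    omega
  have hker : LinearMap.ker A.mulVecLin ≠ ⊥ := by
    intro h
    exact hnotinj (LinearMap.ker_eq_bot.mp h)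
  obtain ⟨ξ, hξmem, hξ0⟩ := Submodule.exists_mem_ne_zero_of_ne_bot hker
  have hAv : A.mulVec ξ = 0 := hξmem
  have h1 : m' ⬝ᵥ ξ = 0 := congrFun hAv 0
  have h2 : m'' ⬝ᵥ ξ = 0 := congrFun hAv 1
  refine ⟨ξ, hξ0, ?_, ?_⟩
  · rw [dotProduct_comm, sub_dotProduct, h1, h2, sub_zero]
  · have hU : U' - U'' = ρ⁻¹ • (Matrix.vecMulVec m' m' - Matrix.vecMulVec m'' m'') := by
      have := congrArg₂ (· - ·) hK' hK''
      simp only [sub_self] at this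
      rw [smul_sub]
      linear_combination (norm := abel) -this
    rw [hU]
    funext i
    simp only [Matrix.mulVec, Matrix.smul_apply, Matrix.sub_apply, vecMulVec_apply, dotProduct,
      Pi.zero_apply, smul_eq_mul]
    have e : ∀ v : Fin n → ℝ, v ⬝ᵥ ξ = 0 → ∑ j, v i * v j * ξ j = 0 := by
      intro v hv
      have hv' : ∑ j, v j * ξ j = 0 := hv
      calc ∑ j, v i * v j * ξ j = v i * ∑ j, v j * ξ j := by
            rw [Finset.mul_sum]; exact Finset.sum_congr rfl fun j _ => by ring
        _ = 0 := by rw [hv', mul_zero]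
    have key : ∑ x, ρ⁻¹ * (m' i * m' x - m'' i * m'' x) * ξ x
        = ρ⁻¹ * ((∑ x, m' i * m' x * ξ x) - ∑ x, m'' i * m'' x * ξ x) := by
      rw [← Finset.sum_sub_distrib, Finset.mul_sum]
      exact Finset.sum_congr rfl fun j _ => by ring
    rw [key, e m' h1, e m'' h2, sub_zero, mul_zero]
end
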